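/- Let (R,m) be a Noetherian local ring, I an ideal, and a ∈ I \ mI a nonzerodivisor such that a* is a nonzerodivisor in F(I) and a° is a nonzerodivisor in G(I). Suppose x ∈ m and a_1 = a, a_2, …, a_{d−1} ∈ I satisfy mI^n + aR = xI^n + (a_2,…,a_{d−1})mI^{n−1} + aR for some n ≥ 1. Then mI^n = xI^n + (a, a_2, …, a_{d−1})mI^{n−1}. -/

import Mathlib

open IsLocalRing

/-- The fiber cone `F(I) = ⊕ Iⁿ/mIⁿ`, realized as the Rees algebra `R[It]` modulo
the extension of `m`. -/
noncomputable def fiberCone {R : Type*} [CommRing R] (m I : Ideal R) :=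
  (reesAlgebra I) ⧸ (Ideal.map (algebraMap R (reesAlgebra I)) m)

noncomputable instance {R : Type*} [CommRing R] (m I : Ideal R) : CommRing (fiberCone m I) :=
  Ideal.Quotient.commRing _

/-- The class of `b ∈ Iⁿ` in the degree-`n` piece of the fiber cone. -/
noncomputable def fiberClass {R : Type*} [CommRing R] (m I : Ideal R) (n : ℕ) (b : R)
    (hb : b ∈ I ^ n) : fiberCone m I :=
  Ideal.Quotient.mk _ ⟨Polynomial.monomial n b, reesAlgebra.monomial_mem.mpr hb⟩

/-- The associated graded ring `G(I) = ⊕ Iⁿ/Iⁿ⁺¹`, realized as `R[It]/I·R[It]`. -/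
noncomputable def assocGraded {R : Type*} [CommRing R] (I : Ideal R) :=
  (reesAlgebra I) ⧸ (Ideal.map (algebraMap R (reesAlgebra I)) I)

noncomputable instance {R : Type*} [CommRing R] (I : Ideal R) : CommRing (assocGraded I) :=
  Ideal.Quotient.commRing _

/-- The class of `b ∈ Iⁿ` in the degree-`n` piece of `G(I)`. -/
noncomputable def gradedClass {R : Type*} [CommRing R] (I : Ideal R) (n : ℕ) (b : R)
    (hb : b ∈ I ^ n) : assocGraded I :=
  Ideal.Quotient.mk _ ⟨Polynomial.monomial n b, reesAlgebra.monomial_mem.mpr hb⟩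

section Aux

variable {R : Type*} [CommRing R]

open Polynomial

/-- Every element of the extension of `J` to the Rees algebra has `j`-th coefficient in
`J * I ^ j`. -/
lemma coeff_mem_of_mem_map (I J : Ideal R) {g : reesAlgebra I}
    (hg : g ∈ Ideal.map (algebraMap R (reesAlgebra I)) J) (j : ℕ) :
    (g : R[X]).coeff j ∈ J * I ^ j := by
  have key : ∀ g : reesAlgebra I, g ∈ Ideal.map (algebraMap R (reesAlgebra I)) J →
      ∀ j, (g : R[X]).coeff j ∈ J * I ^ j := by
    intro g hg
    refine Submodule.span_induction
      (p := fun (g : reesAlgebra I) (_ : g ∈ Ideal.map (algebraMap R (reesAlgebra I)) J) =>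
        ∀ j, ((g : R[X]).coeff j) ∈ J * I ^ j)
      ?_ ?_ ?_ ?_ hg
    · rintro x ⟨c, hc, rfl⟩ j
      show (Polynomial.C c).coeff j ∈ J * I ^ j
      rw [Polynomial.coeff_C]
      split
      · next h => subst h; simpa using Ideal.mul_mem_right 1 J hc
      · exact zero_mem _
    · intro j
      show ((0 : reesAlgebra I) : R[X]).coeff j ∈ J * I ^ j
      rw [ZeroMemClass.coe_zero, Polynomial.coeff_zero]
      exact zero_mem _
    · intro f g _ _ hf hg j
      have : ((f + g : reesAlgebra I) : R[X]).coeff j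
          = (f : R[X]).coeff j + (g : R[X]).coeff j := by
        simp
      rw [this]; exact add_mem (hf j) (hg j)
    · intro f g _ hg j
      rw [smul_eq_mul, MulMemClass.coe_mul, Polynomial.coeff_mul]
      refine sum_mem fun c hc => ?_
      have h1 : (f : R[X]).coeff c.1 ∈ I ^ c.1 := (mem_reesAlgebra_iff I (f : R[X])).mp f.2 c.1
      have h2 : (g : R[X]).coeff c.2 ∈ J * I ^ c.2 := hg c.2
      have := Ideal.mul_mem_mul h1 h2
      have heq : I ^ c.1 * (J * I ^ c.2) = J * I ^ (c.1 + c.2) := by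
        rw [pow_add]; ring
      rw [heq] at this
      rwa [Finset.HasAntidiagonal.mem_antidiagonal.mp hc] at this
  exact key g hg j

lemma monomial_mem_map (I J : Ideal R) (n : ℕ) {b : R} (hb : b ∈ J * I ^ n)
    (hb' : (Polynomial.monomial n) b ∈ reesAlgebra I) :
    (⟨(Polynomial.monomial n) b, hb'⟩ : reesAlgebra I) ∈
      Ideal.map (algebraMap R (reesAlgebra I)) J := by
  have key : ∀ b, b ∈ J * I ^ n → ∃ h : b ∈ I ^ n,
      (⟨(Polynomial.monomial n) b, reesAlgebra.monomial_mem.mpr h⟩ : reesAlgebra I) ∈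
        Ideal.map (algebraMap R (reesAlgebra I)) J := by
    intro b hb
    refine Submodule.mul_induction_on' (C := fun b _ => ∃ h : b ∈ I ^ n,
      (⟨(Polynomial.monomial n) b, reesAlgebra.monomial_mem.mpr h⟩ : reesAlgebra I) ∈
        Ideal.map (algebraMap R (reesAlgebra I)) J) ?_ ?_ hb
    · intro c hc s hs
      refine ⟨Ideal.mul_mem_left _ c hs, ?_⟩
      have heq : (⟨(Polynomial.monomial n) (c * s),
            reesAlgebra.monomial_mem.mpr (Ideal.mul_mem_left _ c hs)⟩ : reesAlgebra I)
          = (algebraMap R (reesAlgebra I) c) *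
            ⟨(Polynomial.monomial n) s, reesAlgebra.monomial_mem.mpr hs⟩ := by
        apply Subtype.ext
        show (Polynomial.monomial n) (c * s) = Polynomial.C c * (Polynomial.monomial n) s
        rw [Polynomial.C_mul_monomial]
      rw [heq]
      exact Ideal.mul_mem_right _ _ (Ideal.mem_map_of_mem _ hc)
    · rintro x _ y _ ⟨hx, hx'⟩ ⟨hy, hy'⟩
      refine ⟨add_mem hx hy, ?_⟩
      have heq : (⟨(Polynomial.monomial n) (x + y),
            reesAlgebra.monomial_mem.mpr (add_mem hx hy)⟩ : reesAlgebra I)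
          = ⟨(Polynomial.monomial n) x, reesAlgebra.monomial_mem.mpr hx⟩ +
            ⟨(Polynomial.monomial n) y, reesAlgebra.monomial_mem.mpr hy⟩ := by
        apply Subtype.ext
        show (Polynomial.monomial n) (x + y) = _
        rw [map_add]; rfl
      rw [heq]
      exact add_mem hx' hy'
  obtain ⟨h, hmem⟩ := key b hb
  convert hmem using 2

lemma monomial_mem_map_iff (I J : Ideal R) (n : ℕ) {b : R}
    (hb' : (Polynomial.monomial n) b ∈ reesAlgebra I) :
    (⟨(Polynomial.monomial n) b, hb'⟩ : reesAlgebra I) ∈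
      Ideal.map (algebraMap R (reesAlgebra I)) J ↔ b ∈ J * I ^ n := by
  constructor
  · intro h
    have := coeff_mem_of_mem_map I J h n
    simpa [Polynomial.coeff_monomial] using this
  · intro h
    exact monomial_mem_map I J n h hb'

lemma fiberClass_mul (m I : Ideal R) (j : ℕ) (r b : R) (hr : r ∈ I ^ j) (hb : b ∈ I ^ 1) :
    fiberClass m I j r hr * fiberClass m I 1 b hb
      = fiberClass m I (j + 1) (r * b) (by
          have := Ideal.mul_mem_mul hr hb
          rwa [← pow_add] at this) := by
  unfold fiberClass
  refine congrArg (Ideal.Quotient.mk _) (Subtype.ext ?_)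
  show (Polynomial.monomial j) r * (Polynomial.monomial 1) b = _
  rw [Polynomial.monomial_mul_monomial]

lemma fiberClass_eq_zero_iff (m I : Ideal R) (j : ℕ) (b : R) (hb : b ∈ I ^ j) :
    fiberClass m I j b hb = 0 ↔ b ∈ m * I ^ j := by
  unfold fiberClass
  exact Ideal.Quotient.eq_zero_iff_mem.trans (monomial_mem_map_iff I m j _)

lemma gradedClass_mul (I : Ideal R) (j : ℕ) (r b : R) (hr : r ∈ I ^ j) (hb : b ∈ I ^ 1) :
    gradedClass I j r hr * gradedClass I 1 b hb
      = gradedClass I (j + 1) (r * b) (by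
          have := Ideal.mul_mem_mul hr hb
          rwa [← pow_add] at this) := by
  unfold gradedClass
  refine congrArg (Ideal.Quotient.mk _) (Subtype.ext ?_)
  show (Polynomial.monomial j) r * (Polynomial.monomial 1) b = _
  rw [Polynomial.monomial_mul_monomial]

lemma gradedClass_eq_zero_iff (I : Ideal R) (j : ℕ) (b : R) (hb : b ∈ I ^ j) :
    gradedClass I j b hb = 0 ↔ b ∈ I * I ^ j := by
  unfold gradedClass
  exact Ideal.Quotient.eq_zero_iff_mem.trans (monomial_mem_map_iff I I j _)

end Aux

/-- if `a ∈ I \ mI` is a nonzerodivisor with `a*` a nonzerodivisor in `F(I)` and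
`a°` a nonzerodivisor in `G(I)`, and `mIⁿ + aR = xIⁿ + (a₂,…,a_{d−1})mI^{n−1} + aR` for some
`n ≥ 1`, then `mIⁿ = xIⁿ + (a, a₂, …, a_{d−1})mI^{n−1}`. -/
theorem stmt10 {R : Type*} [CommRing R] [IsLocalRing R] [IsNoetherianRing R]
    (I : Ideal R) (a : R) (haI : a ∈ I) (ham : a ∉ maximalIdeal R * I)
    (hreg : a ∈ nonZeroDivisors R)
    (hstar : fiberClass (maximalIdeal R) I 1 a (by simpa using haI) ∈
      nonZeroDivisors (fiberCone (maximalIdeal R) I))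
    (hcirc : gradedClass I 1 a (by simpa using haI) ∈ nonZeroDivisors (assocGraded I))
    (x : R) (hx : x ∈ maximalIdeal R)
    (k : ℕ) (rest : Fin k → R) (hrest : ∀ i, rest i ∈ I)
    (n : ℕ) (hn : 1 ≤ n)
    (h : maximalIdeal R * I ^ n + Ideal.span {a} =
        Ideal.span {x} * I ^ n +
          Ideal.span (Set.range rest) * (maximalIdeal R * I ^ (n - 1)) +
          Ideal.span {a}) :
    maximalIdeal R * I ^ n =
      Ideal.span {x} * I ^ n +
        (Ideal.span {a} ⊔ Ideal.span (Set.range rest)) *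
          (maximalIdeal R * I ^ (n - 1)) := by
  
  -- set up notation
  obtain ⟨p, rfl⟩ : ∃ p, n = p + 1 := ⟨n - 1, (Nat.succ_pred_eq_of_pos hn).symm⟩
  have hp : p + 1 - 1 = p := rfl
  rw [hp] at h ⊢
  set M := maximalIdeal R with hM
  have ha1 : a ∈ I ^ 1 := by simpa using haI
  -- claim 1: if r * a ∈ I ^ (p+1) then r ∈ I ^ p
  have claim1 : ∀ r : R, r * a ∈ I ^ (p + 1) → r ∈ I ^ p := by
    intro r hra
    have key : ∀ j, j ≤ p → r ∈ I ^ j := by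
      intro j
      induction j with
      | zero => intro _; simp
      | succ k ih =>
        intro hk
        have hrk : r ∈ I ^ k := ih (Nat.le_of_succ_le hk)
        have hra' : r * a ∈ I ^ (k + 1 + 1) :=
          Ideal.pow_le_pow_right (by omega) hra
        have hzero : gradedClass I (k + 1) (r * a)
            (Ideal.pow_le_pow_right (by omega) hra) = 0 := by
          rw [gradedClass_eq_zero_iff]
          have : I * I ^ (k + 1) = I ^ (k + 1 + 1) := by ring
          rw [this]; exact hra'
        have hmul := gradedClass_mul I k r a hrk ha1
        rw [hzero] at hmul
        have := (mem_nonZeroDivisors_iff.mp hcirc).2 _ hmul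
        rw [gradedClass_eq_zero_iff] at this
        have heq : I * I ^ k = I ^ (k + 1) := by ring
        rwa [heq] at this
    exact key p le_rfl
  -- claim 2: if r ∈ I ^ p and r * a ∈ M * I ^ (p+1) then r ∈ M * I ^ p
  have claim2 : ∀ r : R, r ∈ I ^ p → r * a ∈ M * I ^ (p + 1) → r ∈ M * I ^ p := by
    intro r hr hra
    have hra' : r * a ∈ I ^ (p + 1) := Ideal.mul_le_right hra
    have hzero : fiberClass M I (p + 1) (r * a) hra' = 0 := by
      rw [fiberClass_eq_zero_iff]; exact hra
    have hmul := fiberClass_mul M I p r a hr ha1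
    rw [show fiberClass M I (p+1) (r*a) _ = fiberClass M I (p+1) (r*a) hra' from rfl,
      hzero] at hmul
    have := (mem_nonZeroDivisors_iff.mp hstar).2 _ hmul
    rwa [fiberClass_eq_zero_iff] at this
  -- basic containments
  have hrestI : Ideal.span (Set.range rest) ≤ I := by
    rw [Ideal.span_le]; rintro _ ⟨i, rfl⟩; exact hrest i
  have haI' : Ideal.span {a} ≤ I := by
    rw [Ideal.span_le]; simpa using haI
  have hxM : Ideal.span {x} ≤ M := by
    rw [Ideal.span_le]; simpa using hx
  have hIpow : I * (M * I ^ p) = M * I ^ (p + 1) := by ring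
  have hsub : Ideal.span {x} * I ^ (p + 1) +
      Ideal.span (Set.range rest) * (M * I ^ p) ≤ M * I ^ (p + 1) := by
    refine sup_le ?_ ?_
    · exact Ideal.mul_mono hxM le_rfl
    · calc Ideal.span (Set.range rest) * (M * I ^ p) ≤ I * (M * I ^ p) :=
            Ideal.mul_mono hrestI le_rfl
        _ = M * I ^ (p + 1) := hIpow
  apply le_antisymm
  · -- hard direction
    intro z hz
    have hz' : z ∈ Ideal.span {x} * I ^ (p + 1) +
        Ideal.span (Set.range rest) * (M * I ^ p) + Ideal.span {a} := by
      rw [← h]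
      exact Ideal.mem_sup_left hz
    rw [Submodule.add_eq_sup, Submodule.mem_sup] at hz'
    obtain ⟨y, hy, c, hc, rfl⟩ := hz'
    obtain ⟨r, rfl⟩ := Ideal.mem_span_singleton'.mp hc
    have hy' : y ∈ M * I ^ (p + 1) := hsub hy
    have hra : r * a ∈ M * I ^ (p + 1) := by
      have : r * a = y + r * a - y := by ring
      rw [this]; exact Submodule.sub_mem _ hz hy'
    have hrIp : r ∈ I ^ p := claim1 r (Ideal.mul_le_right hra)
    have hrMIp : r ∈ M * I ^ p := claim2 r hrIp hra
    refine Ideal.add_mem _ ?_ ?_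
    · -- y ∈ RHS
      rw [Submodule.add_eq_sup, Submodule.mem_sup] at hy
      obtain ⟨u, hu, v, hv, rfl⟩ := hy
      refine Ideal.add_mem _ (Ideal.mem_sup_left hu) (Ideal.mem_sup_right ?_)
      exact Ideal.mul_mono le_sup_right le_rfl hv
    · -- r * a ∈ RHS
      refine Ideal.mem_sup_right ?_
      have : r * a = a * r := mul_comm r a
      rw [this]
      exact Ideal.mul_mem_mul (le_sup_left (a := Ideal.span {a})
        (Ideal.mem_span_singleton_self a)) hrMIp
  · -- easy direction
    refine sup_le ?_ ?_
    · exact Ideal.mul_mono hxM le_rfl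
    · calc (Ideal.span {a} ⊔ Ideal.span (Set.range rest)) * (M * I ^ p)
          ≤ I * (M * I ^ p) := Ideal.mul_mono (sup_le haI' hrestI) le_rfl
        _ = M * I ^ (p + 1) := hIpow
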